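/- Rescaling covariance of the generalized Ricci tensor: for structure constants κ'_{abc} = εμ·κ_{abc} and 3-form coefficients H'_{abc} = εμ·H_{abc} (ε = ±1, μ > 0) in ε-rescaled orthonormal bases, the Dorfman coefficients satisfy B'_{ABC} = εμ·B_{ABC} and (B')^C_{AB} = μ·B^C_{AB}, hence the Ricci components satisfy Ric'(e'_A, e'_B) = μ² Ric(e_A, e_B) when the divergence rescales as δ' = μδ. Consequently (G, H, 𝒢_g, δ) is generalized Einstein iff (G, εμ^{-2}H, 𝒢_{εμ^{-2}g}, μδ) is. -/
import Mathlib


/-!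
STATEMENT 18: Rescaling covariance of the generalized Ricci tensor.  In an adapted
orthonormal basis with signs `ε` (the `g`-norms of the basis vectors), lowered structure
constants `κ`, three-form coefficients `H` and divergence components `δ⁺` (on `E₊`) and
`δ⁻` (on `E₋`), the mixed Dorfman coefficients are
`B_{aj'k'} = ½(H − κ_{aj'k'} + κ_{j'k'a} − κ_{k'aj'})` (`Bp`) and
`B_{i'bc} = ½(H + κ_{i'bc} − κ_{bci'} + κ_{ci'b})` (`Bm`), and the Ricci components are
`R^δ_{ia} = Σ B_{bij}B_{jab} ε_{j'} ε_b + Σ_c ε_c B_{iac} δ⁺_c` and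
`R^δ_{ai} = Σ B_{bij}B_{jab} ε_{j'} ε_b − Σ_j ε_{j'} B_{aij} δ⁻_j`.
Under `κ' = εμ·κ`, `H' = εμ·H` (here `σ = ±1` plays the role of `ε` and `m = μ > 0`),
with rescaled signs `ε' = σ·ε` and divergence `δ' = m·δ`, one has `B' = σm·B`,
`Ric' = m²·Ric`, and hence the generalized Einstein property is preserved.
-/

namespace Rescaling

noncomputable def Bp {n : ℕ} (κ H : Fin n → Fin n → Fin n → ℝ) (a j k : Fin n) : ℝ :=
  (H a j k - κ a j k + κ j k a - κ k a j) / 2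

noncomputable def Bm {n : ℕ} (κ H : Fin n → Fin n → Fin n → ℝ) (i b c : Fin n) : ℝ :=
  (H i b c + κ i b c - κ b c i + κ c i b) / 2

/-- `R^δ_{ia}`, the `E₋ ⊗ E₊` Ricci component with divergence term. -/
noncomputable def Ricp {n : ℕ} (ε : Fin n → ℝ) (κ H : Fin n → Fin n → Fin n → ℝ)
    (δp : Fin n → ℝ) (i a : Fin n) : ℝ :=
  (∑ b : Fin n, ∑ j : Fin n, Bp κ H b i j * Bm κ H j a b * ε j * ε b)
    + ∑ c : Fin n, ε c * Bm κ H i a c * δp c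

/-- `R^δ_{ai}`, the `E₊ ⊗ E₋` Ricci component with divergence term. -/
noncomputable def Ricm {n : ℕ} (ε : Fin n → ℝ) (κ H : Fin n → Fin n → Fin n → ℝ)
    (δm : Fin n → ℝ) (a i : Fin n) : ℝ :=
  (∑ b : Fin n, ∑ j : Fin n, Bp κ H b i j * Bm κ H j a b * ε j * ε b)
    - ∑ j : Fin n, ε j * Bp κ H a i j * δm j

theorem ricci_rescaling_covariance {n : ℕ}
    (ε : Fin n → ℝ) (κ H : Fin n → Fin n → Fin n → ℝ) (δp δm : Fin n → ℝ)
    (hε : ∀ a, ε a = 1 ∨ ε a = -1)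
    (σ m : ℝ) (hσ : σ = 1 ∨ σ = -1) (hm : 0 < m) :
    (∀ a j k, Bp (fun x y z => σ * m * κ x y z) (fun x y z => σ * m * H x y z) a j k
        = σ * m * Bp κ H a j k) ∧
    (∀ i b c, Bm (fun x y z => σ * m * κ x y z) (fun x y z => σ * m * H x y z) i b c
        = σ * m * Bm κ H i b c) ∧
    (∀ i a, Ricp (fun x => σ * ε x)
        (fun x y z => σ * m * κ x y z) (fun x y z => σ * m * H x y z)
        (fun x => m * δp x) i a = m ^ 2 * Ricp ε κ H δp i a) ∧
    (∀ a i, Ricm (fun x => σ * ε x)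
        (fun x y z => σ * m * κ x y z) (fun x y z => σ * m * H x y z)
        (fun x => m * δm x) a i = m ^ 2 * Ricm ε κ H δm a i) ∧
    ((∀ i a : Fin n, Ricp ε κ H δp i a = 0 ∧ Ricm ε κ H δm a i = 0) ↔
      (∀ i a : Fin n,
        Ricp (fun x => σ * ε x)
          (fun x y z => σ * m * κ x y z) (fun x y z => σ * m * H x y z)
          (fun x => m * δp x) i a = 0 ∧
        Ricm (fun x => σ * ε x)
          (fun x y z => σ * m * κ x y z) (fun x y z => σ * m * H x y z)
          (fun x => m * δm x) a i = 0)) := by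

  have hσ2 : σ * σ = 1 := by rcases hσ with h | h <;> simp [h]
  have hBp : ∀ a j k, Bp (fun x y z => σ * m * κ x y z) (fun x y z => σ * m * H x y z) a j k
      = σ * m * Bp κ H a j k := by
    intro a j k; simp only [Bp]; ring
  have hBm : ∀ i b c, Bm (fun x y z => σ * m * κ x y z) (fun x y z => σ * m * H x y z) i b c
      = σ * m * Bm κ H i b c := by
    intro i b c; simp only [Bm]; ring
  have hRp : ∀ i a, Ricp (fun x => σ * ε x)
      (fun x y z => σ * m * κ x y z) (fun x y z => σ * m * H x y z)
      (fun x => m * δp x) i a = m ^ 2 * Ricp ε κ H δp i a := by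
    intro i a
    simp only [Ricp, hBp, hBm, Finset.mul_sum, mul_add]
    congr 1
    · refine Finset.sum_congr rfl fun b _ => Finset.sum_congr rfl fun j _ => ?_
      have : σ * m * Bp κ H b i j * (σ * m * Bm κ H j a b) * (σ * ε j) * (σ * ε b)
          = (σ * σ) * (σ * σ) * (m ^ 2 * (Bp κ H b i j * Bm κ H j a b * ε j * ε b)) := by ring
      rw [this, hσ2]; ring
    · refine Finset.sum_congr rfl fun c _ => ?_
      have : σ * ε c * (σ * m * Bm κ H i a c) * (m * δp c)
          = (σ * σ) * (m ^ 2 * (ε c * Bm κ H i a c * δp c)) := by ring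
      rw [this, hσ2]; ring
  have hRm : ∀ a i, Ricm (fun x => σ * ε x)
      (fun x y z => σ * m * κ x y z) (fun x y z => σ * m * H x y z)
      (fun x => m * δm x) a i = m ^ 2 * Ricm ε κ H δm a i := by
    intro a i
    simp only [Ricm, hBp, hBm, Finset.mul_sum, mul_sub]
    congr 1
    · refine Finset.sum_congr rfl fun b _ => Finset.sum_congr rfl fun j _ => ?_
      have : σ * m * Bp κ H b i j * (σ * m * Bm κ H j a b) * (σ * ε j) * (σ * ε b)
          = (σ * σ) * (σ * σ) * (m ^ 2 * (Bp κ H b i j * Bm κ H j a b * ε j * ε b)) := by ring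
      rw [this, hσ2]; ring
    · refine Finset.sum_congr rfl fun j _ => ?_
      have : σ * ε j * (σ * m * Bp κ H a i j) * (m * δm j)
          = (σ * σ) * (m ^ 2 * (ε j * Bp κ H a i j * δm j)) := by ring
      rw [this, hσ2]; ring
  have hm2 : (m : ℝ) ^ 2 ≠ 0 := pow_ne_zero _ (ne_of_gt hm)
  refine ⟨hBp, hBm, hRp, hRm, ?_⟩
  constructor
  · intro h i a
    obtain ⟨h1, h2⟩ := h i a
    rw [hRp, hRm, h1, h2]; simp
  · intro h i a
    obtain ⟨h1, h2⟩ := h i a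
    rw [hRp] at h1; rw [hRm] at h2
    exact ⟨by exact (mul_eq_zero.mp h1).resolve_left hm2,
           by exact (mul_eq_zero.mp h2).resolve_left hm2⟩


end Rescaling
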